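/- In the symmetric setting of the Lovász Local Lemma with mutually independent variables, if every bad event A ∈ A satisfies Pr[A] ≤ p and every A shares a variable with at most d other events in A, and e·p·(d+1) ≤ 1, then there exists an assignment of the variables avoiding all events in A. -/

import Mathlib

open MeasureTheory

lemma lll_comap_lift {n : ℕ} {α : Fin n → Type*} [∀ i, MeasurableSpace (α i)]
    {T S : Finset (Fin n)} (h : ∀ i ∈ T, i ∉ S)
    {B : Set (∀ i, α i)}
    (hB : MeasurableSet[MeasurableSpace.comap
      (fun (ω : ∀ i, α i) (i : T) => ω i.1) MeasurableSpace.pi] B) :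
    MeasurableSet[MeasurableSpace.comap
      (fun (ω : ∀ i, α i) (i : {i : Fin n // ¬ i ∈ S}) => ω i.1) MeasurableSpace.pi] B := by
  obtain ⟨B', hB', rfl⟩ := hB
  refine ⟨(fun (f : ∀ i : {i : Fin n // ¬ i ∈ S}, α i.1) (i : T) => f ⟨i.1, h i.1 i.2⟩) ⁻¹' B',
    ?_, rfl⟩
  exact (measurable_pi_lambda _ (fun i => measurable_pi_apply _)) hB'

lemma lll_indep {n : ℕ} {α : Fin n → Type*} [∀ i, MeasurableSpace (α i)]
    (μ : ∀ i, Measure (α i)) [∀ i, IsProbabilityMeasure (μ i)]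
    (S : Finset (Fin n)) {B C : Set (∀ i, α i)}
    (hB : MeasurableSet[MeasurableSpace.comap
      (fun (ω : ∀ i, α i) (i : S) => ω i.1) MeasurableSpace.pi] B)
    (hC : MeasurableSet[MeasurableSpace.comap
      (fun (ω : ∀ i, α i) (i : {i : Fin n // ¬ i ∈ S}) => ω i.1) MeasurableSpace.pi] C) :
    Measure.pi μ (B ∩ C) = Measure.pi μ B * Measure.pi μ C := by
  classical
  obtain ⟨B', hB', rfl⟩ := hB
  obtain ⟨C', hC', rfl⟩ := hC
  have hmp := measurePreserving_piEquivPiSubtypeProd (α := α) μ (fun i => i ∈ S)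
  have key : ∀ (U : Set (∀ i : {i // i ∈ S}, α i)) (V : Set (∀ i : {i // ¬ i ∈ S}, α i)),
      MeasurableSet U → MeasurableSet V →
      Measure.pi μ ((fun (ω : ∀ i, α i) (i : S) => ω i.1) ⁻¹' U ∩
        (fun (ω : ∀ i, α i) (i : {i : Fin n // ¬ i ∈ S}) => ω i.1) ⁻¹' V) =
      Measure.pi (fun i : {i // i ∈ S} => μ i.1) U *
      Measure.pi (fun i : {i // ¬ i ∈ S} => μ i.1) V := by
    intro U V hU hV
    have h1 : (fun (ω : ∀ i, α i) (i : S) => ω i.1) ⁻¹' U ∩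
        (fun (ω : ∀ i, α i) (i : {i : Fin n // ¬ i ∈ S}) => ω i.1) ⁻¹' V =
        (MeasurableEquiv.piEquivPiSubtypeProd α (fun i => i ∈ S)) ⁻¹' (U ×ˢ V) := rfl
    rw [h1, hmp.measure_preimage (hU.prod hV).nullMeasurableSet, Measure.prod_prod]
    congr!
  have e1 := key B' Set.univ hB' MeasurableSet.univ
  have e2 := key Set.univ C' MeasurableSet.univ hC'
  have e3 := key B' C' hB' hC'
  simp only [Set.preimage_univ, Set.inter_univ, Set.univ_inter, measure_univ, mul_one, one_mul]
    at e1 e2 e3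
  rw [e3, e1, e2]

lemma lll_numeric (p : ℝ) (d : ℕ) (hlll : Real.exp 1 * p * ((d:ℝ)+1) ≤ 1) :
    p ≤ (1/((d:ℝ)+2)) * (((d:ℝ)+1)/((d:ℝ)+2))^d := by
  set D : ℝ := (d:ℝ)+1 with hDdef
  have hD : 0 < D := by positivity
  have hE : 0 < Real.exp 1 := Real.exp_pos 1
  have h1 : (D+1)/D ≤ Real.exp (1/D) := by
    have h := Real.add_one_le_exp (1/D)
    have h2 : (D+1)/D = 1/D + 1 := by field_simp; ring
    rw [h2]; exact h
  have h2 : ((D+1)/D)^(d+1) ≤ Real.exp 1 := by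
    calc ((D+1)/D)^(d+1) ≤ (Real.exp (1/D))^(d+1) :=
          pow_le_pow_left₀ (by positivity) h1 (d+1)
      _ = Real.exp (((d:ℝ)+1) * (1/D)) := by
          rw [← Real.exp_nat_mul]; push_cast; ring_nf
      _ = Real.exp 1 := by rw [← hDdef]; congr 1; field_simp
  have h3 : (D+1)^(d+1) ≤ Real.exp 1 * D^(d+1) := by
    rw [div_pow] at h2
    exact (div_le_iff₀ (by positivity)).1 h2
  have hp' : p ≤ 1/(Real.exp 1 * D) := by
    rw [le_div_iff₀ (by positivity)]
    calc p * (Real.exp 1 * D) = Real.exp 1 * p * D := by ring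
      _ ≤ 1 := hlll
  refine hp'.trans ?_
  have hr : (1/(D+1)) * (D/(D+1))^d = D^d/(D+1)^(d+1) := by
    rw [div_pow, pow_succ]
    field_simp
  have hD2 : D + 1 = (d:ℝ)+2 := by rw [hDdef]; ring
  rw [← hD2, hr, div_le_div_iff₀ (by positivity) (by positivity), one_mul]
  calc (D+1)^(d+1) ≤ Real.exp 1 * D^(d+1) := h3
    _ = D^d * (Real.exp 1 * D) := by rw [pow_succ]; ring

theorem stmt7 {n m : ℕ} (α : Fin n → Type*) [∀ i, MeasurableSpace (α i)]
    (μ : ∀ i, Measure (α i)) [∀ i, IsProbabilityMeasure (μ i)]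
    (A : Fin m → Set (∀ i, α i)) (vbl : Fin m → Finset (Fin n))
    (hmeas : ∀ j, MeasurableSet[MeasurableSpace.comap
      (fun (ω : ∀ i, α i) (i : vbl j) => ω i.1) MeasurableSpace.pi] (A j))
    (p : ℝ) (d : ℕ)
    (hp : ∀ j, ((Measure.pi μ) (A j)).toReal ≤ p)
    (hd : ∀ j, (Finset.univ.filter (fun k => k ≠ j ∧ (vbl j ∩ vbl k).Nonempty)).card ≤ d)
    (hlll : Real.exp 1 * p * (d + 1) ≤ 1) :
    ∃ ω : ∀ i, α i, ∀ j, ω ∉ A j := by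
  classical
  set μπ := Measure.pi μ with hμπ
  have hA : ∀ j, MeasurableSet (A j) := by
    intro j
    have hle : MeasurableSpace.comap (fun (ω : ∀ i, α i) (i : vbl j) => ω i.1)
        MeasurableSpace.pi ≤ MeasurableSpace.pi :=
      Measurable.comap_le (measurable_pi_lambda _ (fun i => measurable_pi_apply _))
    exact hle _ (hmeas j)
  set C : Finset (Fin m) → Set (∀ i, α i) := fun s => ⋂ k ∈ s, (A k)ᶜ with hCdef
  set P : Finset (Fin m) → ℝ := fun s => (μπ (C s)).toReal with hPdef
  set Q : Finset (Fin m) → Fin m → ℝ := fun s j => (μπ (A j ∩ C s)).toReal with hQdef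
  have hfin : ∀ T : Set (∀ i, α i), μπ T ≠ ⊤ := fun T => measure_ne_top μπ T
  have hP0 : ∀ s, 0 ≤ P s := fun s => ENNReal.toReal_nonneg
  have hCsub : ∀ {s t : Finset (Fin m)}, s ⊆ t → C t ⊆ C s := by
    intro s t hst ω hω
    simp only [hCdef, Set.mem_iInter] at hω ⊢
    exact fun k hk => hω k (hst hk)
  have peel : ∀ (s : Finset (Fin m)) (j : Fin m), Q s j + P (insert j s) = P s := by
    intro s j
    have h1 : C (insert j s) = C s \ A j := by
      simp only [hCdef, Finset.set_biInter_insert]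
      rw [Set.diff_eq, Set.inter_comm]
    have h2 := measure_inter_add_diff (μ := μπ) (C s) (hA j)
    have h3 : A j ∩ C s = C s ∩ A j := Set.inter_comm _ _
    simp only [hPdef, hQdef, h1, h3]
    rw [← ENNReal.toReal_add (hfin _) (hfin _), h2]
  have hindep : ∀ (j : Fin m) (s₂ : Finset (Fin m)),
      (∀ k ∈ s₂, ¬(vbl j ∩ vbl k).Nonempty) →
      μπ (A j ∩ C s₂) = μπ (A j) * μπ (C s₂) := by
    intro j s₂ hs₂
    refine lll_indep μ (vbl j) (hmeas j) ?_
    have hk : ∀ k ∈ s₂, MeasurableSet[MeasurableSpace.comap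
        (fun (ω : ∀ i, α i) (i : {i : Fin n // ¬ i ∈ vbl j}) => ω i.1)
        MeasurableSpace.pi] ((A k)ᶜ) := by
      intro k hkm
      refine MeasurableSet.compl (lll_comap_lift (T := vbl k) (S := vbl j) ?_ (hmeas k))
      intro i hiT hiS
      exact hs₂ k hkm ⟨i, Finset.mem_inter.2 ⟨hiS, hiT⟩⟩
    exact Finset.measurableSet_biInter _ hk
  set x : ℝ := 1/((d:ℝ)+2) with hxdef
  have hx0 : 0 < x := by positivity
  have h1x : 1 - x = ((d:ℝ)+1)/((d:ℝ)+2) := by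
    rw [hxdef]; field_simp; ring
  have h1x0 : 0 < 1 - x := by rw [h1x]; positivity
  have hpx : p ≤ x * (1-x)^d := by
    rw [h1x, hxdef]; exact lll_numeric p d hlll
  have key : ∀ s : Finset (Fin m), ∀ j, j ∉ s → Q s j ≤ x * P s := by
    intro s
    induction s using Finset.strongInduction with
    | _ s IH =>
      intro j hj
      set s₁ := s.filter (fun k => (vbl j ∩ vbl k).Nonempty) with hs₁
      set s₂ := s.filter (fun k => ¬(vbl j ∩ vbl k).Nonempty) with hs₂
      have hs₂s : s₂ ⊆ s := Finset.filter_subset _ s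
      have hs₁s : s₁ ⊆ s := Finset.filter_subset _ s
      have hunion : s₂ ∪ s₁ = s := by
        rw [hs₁, hs₂, Finset.union_comm, Finset.filter_union_filter_not_eq]
      have hpeel : ∀ t, t ⊆ s₁ → (1-x)^t.card * P s₂ ≤ P (s₂ ∪ t) := by
        intro t
        induction t using Finset.induction with
        | empty => intro _; simp
        | insert _ _ hk IH2 =>
          rename_i k t
          intro ht
          have htsub := Finset.insert_subset_iff.1 ht
          have hIH2 := IH2 htsub.2
          have hknotin : k ∉ s₂ ∪ t := by
            have hkpred := (Finset.mem_filter.1 (htsub.1 : k ∈ s₁)).2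
            simp only [Finset.mem_union, hs₂, Finset.mem_filter, not_or]
            exact ⟨fun hc => hc.2 hkpred, hk⟩
          have hsubs : s₂ ∪ t ⊆ s :=
            Finset.union_subset hs₂s (htsub.2.trans hs₁s)
          have hksub : s₂ ∪ t ⊂ s :=
            Finset.ssubset_iff_of_subset hsubs |>.2 ⟨k, hs₁s htsub.1, hknotin⟩
          have hkey := IH (s₂ ∪ t) hksub k hknotin
          have hpeelk := peel (s₂ ∪ t) k
          have hins : s₂ ∪ insert k t = insert k (s₂ ∪ t) := Finset.union_insert _ _ _
          rw [hins, Finset.card_insert_of_notMem hk]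
          have hexp : (1-x)^(t.card+1) * P s₂ = (1-x) * ((1-x)^t.card * P s₂) := by ring
          rw [hexp]
          have h5 : (1-x) * ((1-x)^t.card * P s₂) ≤ (1-x) * P (s₂ ∪ t) :=
            mul_le_mul_of_nonneg_left hIH2 h1x0.le
          refine h5.trans ?_
          have hPx : (1-x) * P (s₂ ∪ t) = P (s₂ ∪ t) - x * P (s₂ ∪ t) := by ring
          linarith [hkey, hpeelk]
      have h1 : Q s j ≤ p * P s₂ := by
        have hmono : μπ (A j ∩ C s) ≤ μπ (A j ∩ C s₂) :=
          measure_mono (Set.inter_subset_inter_right _ (hCsub hs₂s))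
        have heq := hindep j s₂ (fun k hk => (Finset.mem_filter.1 hk).2)
        calc Q s j ≤ (μπ (A j ∩ C s₂)).toReal := ENNReal.toReal_mono (hfin _) hmono
          _ = (μπ (A j)).toReal * P s₂ := by rw [heq, ENNReal.toReal_mul]
          _ ≤ p * P s₂ := mul_le_mul_of_nonneg_right (hp j) (hP0 _)
      have hcard : s₁.card ≤ d := by
        refine le_trans (Finset.card_le_card ?_) (hd j)
        intro k hkmem
        have := Finset.mem_filter.1 hkmem
        refine Finset.mem_filter.2 ⟨Finset.mem_univ _, ?_, this.2⟩
        rintro rfl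
        exact hj this.1
      have h2 : (1-x)^d * P s₂ ≤ P s := by
        have hfull := hpeel s₁ (Finset.Subset.refl _)
        rw [hunion] at hfull
        refine le_trans ?_ hfull
        refine mul_le_mul_of_nonneg_right ?_ (hP0 _)
        exact pow_le_pow_of_le_one h1x0.le (by linarith) hcard
      calc Q s j ≤ p * P s₂ := h1
        _ ≤ (x * (1-x)^d) * P s₂ := mul_le_mul_of_nonneg_right hpx (hP0 _)
        _ = x * ((1-x)^d * P s₂) := by ring
        _ ≤ x * P s := mul_le_mul_of_nonneg_left h2 hx0.le
  have lower : ∀ s : Finset (Fin m), (1-x)^s.card ≤ P s := by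
    intro s
    induction s using Finset.induction with
    | empty => simp [hPdef, hCdef]
    | insert _ _ hj IH =>
      rename_i j s
      have hkey := key s j hj
      have hpeelj := peel s j
      rw [Finset.card_insert_of_notMem hj, pow_succ]
      have h6 : (1-x)^s.card * (1-x) ≤ P s * (1-x) :=
        mul_le_mul_of_nonneg_right IH h1x0.le
      have h7 : P s * (1-x) = P s - x * P s := by ring
      linarith [hkey, hpeelj]
  have hpos : 0 < P Finset.univ :=
    lt_of_lt_of_le (pow_pos h1x0 _) (lower Finset.univ)
  have hne : μπ (C Finset.univ) ≠ 0 := by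
    intro h
    rw [hPdef] at hpos
    simp only [h, ENNReal.toReal_zero] at hpos
    exact lt_irrefl 0 hpos
  obtain ⟨ω, hω⟩ := nonempty_of_measure_ne_zero hne
  refine ⟨ω, fun j => ?_⟩
  simp only [hCdef, Set.mem_iInter] at hω
  exact hω j (Finset.mem_univ j)
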